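/- Let F be a field with more than two elements (F ≠ F₂) and n a positive integer. Then the electrical linear group EL_n(F) is generated by the matrices Ξ_j(t) for j = 1,…,n and Ξ_{j,j+1}(t) for j = 1,…,n−1, with t ranging over F; i.e., the subgroup of GL_{2n}(F) generated by this smaller set of matrices equals the subgroup generated by all Ξ_j(t) and all Ξ_{i,j}(t) with i ≠ j. -/

import Mathlib

open Module

/-- The generator `Ξ_j(t) = [[I, t E_{j,j}], [0, I]]` of the electrical linear group,
corresponding to adjoining a boundary spike at vertex `j`. -/
def XiD {F : Type*} [Field F] {n : ℕ} (j : Fin n) (t : F) :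
    Matrix (Fin n ⊕ Fin n) (Fin n ⊕ Fin n) F :=
  Matrix.fromBlocks 1 (Matrix.single j j t) 0 1

/-- The generator `Ξ_{i,j}(t) = [[I, 0], [t(E_{i,i} − E_{i,j} − E_{j,i} + E_{j,j}), I]]`
of the electrical linear group, corresponding to adjoining a boundary edge from `i` to `j`. -/
def XiOff {F : Type*} [Field F] {n : ℕ} (i j : Fin n) (t : F) :
    Matrix (Fin n ⊕ Fin n) (Fin n ⊕ Fin n) F :=
  Matrix.fromBlocks 1 0
    (t • (Matrix.single i i (1 : F) - Matrix.single i j 1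
      - Matrix.single j i 1 + Matrix.single j j 1)) 1

/-- The generating set of the electrical linear group inside `GL_{2n}(F)`. -/
def ELGen (F : Type*) [Field F] (n : ℕ) :
    Set ((Matrix (Fin n ⊕ Fin n) (Fin n ⊕ Fin n) F)ˣ) :=
  {A | (∃ j t, (A : Matrix (Fin n ⊕ Fin n) (Fin n ⊕ Fin n) F) = XiD j t) ∨
       (∃ i j t, i ≠ j ∧ (A : Matrix (Fin n ⊕ Fin n) (Fin n ⊕ Fin n) F) = XiOff i j t)}

/-- The electrical linear group `EL_n(F)`: the subgroup of `GL_{2n}(F)` generated by all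
the matrices `Ξ_j(t)` and `Ξ_{i,j}(t)`. -/
def EL (F : Type*) [Field F] (n : ℕ) :
    Subgroup ((Matrix (Fin n ⊕ Fin n) (Fin n ⊕ Fin n) F)ˣ) :=
  Subgroup.closure (ELGen F n)

/-- The "circular planar" generating set: `Ξ_j(t)` for all `j`, and `Ξ_{j,j+1}(t)` for
consecutive indices. -/
def ELGenAdj (F : Type*) [Field F] (n : ℕ) :
    Set ((Matrix (Fin n ⊕ Fin n) (Fin n ⊕ Fin n) F)ˣ) :=
  {A | (∃ j t, (A : Matrix (Fin n ⊕ Fin n) (Fin n ⊕ Fin n) F) = XiD j t) ∨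
       (∃ (i j : Fin n) (t : F), (i : ℕ) + 1 = (j : ℕ) ∧
         (A : Matrix (Fin n ⊕ Fin n) (Fin n ⊕ Fin n) F) = XiOff i j t)}

namespace ELAux

open Matrix

variable {F : Type*} [Field F] {n : ℕ}

lemma xiD_mul (j : Fin n) (a b : F) : XiD j a * XiD j b = XiD j (a + b) := by
  simp [XiD, Matrix.fromBlocks_multiply, Matrix.single_add]
  abel

lemma xiOff_mul (i j : Fin n) (a b : F) : XiOff i j a * XiOff i j b = XiOff i j (a + b) := by
  simp [XiOff, Matrix.fromBlocks_multiply, add_smul]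
  abel

lemma xiD_zero (j : Fin n) : XiD j (0 : F) = 1 := by
  simp [XiD, ← Matrix.fromBlocks_one]

lemma xiOff_zero (i j : Fin n) : XiOff i j (0 : F) = 1 := by
  simp [XiOff, ← Matrix.fromBlocks_one]

/-- The unit corresponding to `XiD`. -/
def uD (j : Fin n) (t : F) : (Matrix (Fin n ⊕ Fin n) (Fin n ⊕ Fin n) F)ˣ where
  val := XiD j t
  inv := XiD j (-t)
  val_inv := by rw [xiD_mul, add_neg_cancel, xiD_zero]
  inv_val := by rw [xiD_mul, neg_add_cancel, xiD_zero]

/-- The unit corresponding to `XiOff`. -/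
def uOff (i j : Fin n) (t : F) : (Matrix (Fin n ⊕ Fin n) (Fin n ⊕ Fin n) F)ˣ where
  val := XiOff i j t
  inv := XiOff i j (-t)
  val_inv := by rw [xiOff_mul, add_neg_cancel, xiOff_zero]
  inv_val := by rw [xiOff_mul, neg_add_cancel, xiOff_zero]

lemma xiOff_symm (i j : Fin n) (t : F) : XiOff i j t = XiOff j i t := by
  unfold XiOff
  congr 1
  congr 1
  abel

/-- The generic six-fold product, with free parameters. -/
lemma six_prod (i i' : Fin n) (h : i ≠ i') (a1 c a2 b1 cp b2 : F) :
    XiD i a1 * XiOff i i' c * XiD i a2 * XiD i' b1 * XiOff i i' cp * XiD i' b2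
    = Matrix.fromBlocks
        (1 + single i i (a1*c + a1*cp + a2*cp + a1*c*b1*cp + a1*c*a2*cp)
           + single i i' (-(a1*c + a1*cp + a2*cp + a1*c*b1*cp + a1*c*a2*cp))
           + single i' i (-(b1*cp)) + single i' i' (b1*cp))
        (single i i (a1 + a2 + a1*c*a2)
           + single i i' (-(a1*cp*b2 + a2*cp*b2 + a1*c*b2 + a1*c*b1
               + a1*c*b1*cp*b2 + a1*c*a2*cp*b2))
           + single i' i' (b1 + b2 + b1*cp*b2))
        (single i i (c + cp + c*b1*cp + c*a2*cp)
           + single i i' (-(c + cp + c*b1*cp + c*a2*cp))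
           + single i' i (-(c + cp + c*b1*cp + c*a2*cp))
           + single i' i' (c + cp + c*b1*cp + c*a2*cp))
        (1 + single i i (c*a2)
           + single i i' (-(cp*b2 + c*b2 + c*b1 + c*b1*cp*b2 + c*a2*cp*b2))
           + single i' i (-(c*a2))
           + single i' i' (cp*b2 + c*b2 + c*b1 + c*b1*cp*b2 + c*a2*cp*b2)) := by
  simp only [XiD, XiOff, Matrix.fromBlocks_multiply, Matrix.mul_one, Matrix.one_mul,
    Matrix.zero_mul, Matrix.mul_zero, add_zero, zero_add, Matrix.smul_mul, Matrix.mul_smul,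
    smul_add, smul_sub, smul_smul, Matrix.smul_single,
    mul_add, add_mul, sub_mul, mul_sub, Matrix.single_mul_single_same,
    Matrix.single_mul_single_of_ne, h, h.symm, ne_eq, not_false_iff]
  rw [Matrix.fromBlocks_inj]
  refine ⟨?_, ?_, ?_, ?_⟩ <;>
    · ext x y
      simp only [Matrix.add_apply, Matrix.sub_apply, Matrix.zero_apply, Matrix.one_apply,
        Matrix.neg_apply, Matrix.single, Matrix.of_apply]
      by_cases hxi : i = x <;> by_cases hxi' : i' = x <;>
        by_cases hyi : i = y <;> by_cases hyi' : i' = y <;>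
        (try subst hxi) <;> (try subst hxi') <;> (try subst hyi) <;> (try subst hyi') <;>
        simp only [*, ne_eq, eq_self_iff_true, if_true, and_true, true_and,
          and_false, false_and, if_false, not_false_iff, and_self, smul_eq_mul,
          iff_true, iff_false, not_true] <;>
        first
          | rfl
          | (exact absurd rfl h)
          | ring1

end ELAux

namespace ELAux

open Matrix

variable {F : Type*} [Field F] {n : ℕ}

/-- The nice form of the conjugating matrix. -/
def Gmat (i i' : Fin n) (s : F) : Matrix (Fin n ⊕ Fin n) (Fin n ⊕ Fin n) F :=
  Matrix.fromBlocks
    (1 + single i i (-1 : F) + single i i' 1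
       + single i' i (-s) + single i' i' s)
    0
    (single i i s + single i i' (-s)
       + single i' i (-s) + single i' i' s)
    (1 + single i i s⁻¹ + single i i' 1
       + single i' i (-s⁻¹) + single i' i' (-1))

lemma G_eq (i i' : Fin n) (h : i ≠ i') (s : F) (hs : s ≠ 0) (hs1 : 1 + s ≠ 0) :
    XiD i 1 * XiOff i i' (-(1+s)⁻¹) * XiD i (-((1+s)*s⁻¹)) * XiD i' 1 * XiOff i i' s
        * XiD i' (-(1+s)⁻¹)
    = Gmat i i' s := by
  have hq : (1+s) * (1+s)⁻¹ = 1 := mul_inv_cancel₀ hs1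
  have hr : s⁻¹ * s = 1 := inv_mul_cancel₀ hs
  rw [six_prod i i' h]
  unfold Gmat
  rw [Matrix.fromBlocks_inj]
  have e1 : (1:F)*(-(1+s)⁻¹) + 1*s + (-((1+s)*s⁻¹))*s + 1*(-(1+s)⁻¹)*1*s
      + 1*(-(1+s)⁻¹)*(-((1+s)*s⁻¹))*s = -1 := by
    linear_combination ((1+s)⁻¹ - 1)*(1+s) * hr
  have e2 : (1:F)*s = s := one_mul s
  have e3 : (1:F) + (-((1+s)*s⁻¹)) + 1*(-(1+s)⁻¹)*(-((1+s)*s⁻¹)) = 0 := by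
    linear_combination (-1 : F)*hr + s⁻¹ * hq
  have e4 : -((1:F)*s*(-(1+s)⁻¹) + (-((1+s)*s⁻¹))*s*(-(1+s)⁻¹) + 1*(-(1+s)⁻¹)*(-(1+s)⁻¹)
      + 1*(-(1+s)⁻¹)*1 + 1*(-(1+s)⁻¹)*1*s*(-(1+s)⁻¹)
      + 1*(-(1+s)⁻¹)*(-((1+s)*s⁻¹))*s*(-(1+s)⁻¹)) = 0 := by
    linear_combination (-(1+s) * ((1+s)⁻¹ - ((1+s)⁻¹)^2)) * hr
  have e5 : (1:F) + (-(1+s)⁻¹) + 1*s*(-(1+s)⁻¹) = 0 := by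
    linear_combination (-1 : F)*hq
  have e6 : (-(1+s)⁻¹) + s + (-(1+s)⁻¹)*1*s + (-(1+s)⁻¹)*(-((1+s)*s⁻¹))*s = s := by
    linear_combination hr + (s⁻¹*s - 1)*hq
  have e7 : (-(1+s)⁻¹)*(-((1+s)*s⁻¹)) = s⁻¹ := by
    linear_combination s⁻¹ * hq
  have e8 : s*(-(1+s)⁻¹) + (-(1+s)⁻¹)*(-(1+s)⁻¹) + (-(1+s)⁻¹)*1
      + (-(1+s)⁻¹)*1*s*(-(1+s)⁻¹) + (-(1+s)⁻¹)*(-((1+s)*s⁻¹))*s*(-(1+s)⁻¹) = -1 := by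
    linear_combination (-1:F) * hq - (1+s)*((1+s)⁻¹)^2 * hr
  refine ⟨?_, ?_, ?_, ?_⟩
  · rw [e1, e2]; norm_num
  · rw [e3, e4, e5]; simp
  · rw [e6]
  · rw [e8, e7]; norm_num

end ELAux

namespace ELAux

open Matrix

variable {F : Type*} [Field F] {n : ℕ}

set_option maxHeartbeats 3000000 in
lemma comm_G (i i' j : Fin n) (h1 : i ≠ i') (h2 : i ≠ j) (h3 : i' ≠ j) (s t : F) :
    Gmat i i' s * XiOff i' j t = XiOff i j t * Gmat i i' s := by
  unfold Gmat XiOff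
  rw [Matrix.fromBlocks_multiply, Matrix.fromBlocks_multiply]
  simp only [Matrix.mul_one, Matrix.one_mul, Matrix.zero_mul, Matrix.mul_zero, add_zero,
    zero_add, Matrix.smul_mul, Matrix.mul_smul, smul_add, smul_sub, smul_smul,
    Matrix.smul_single, mul_add, add_mul, sub_mul, mul_sub,
    Matrix.single_mul_single_same, Matrix.single_mul_single_of_ne,
    h1, h1.symm, h2, h2.symm, h3, h3.symm, ne_eq, not_false_iff]
  rw [Matrix.fromBlocks_inj]
  refine ⟨by first | rfl | abel, by first | rfl | abel, ?_, by first | rfl | abel⟩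
  ext x y
  simp only [Matrix.add_apply, Matrix.sub_apply, Matrix.zero_apply, Matrix.one_apply,
    Matrix.neg_apply, Matrix.smul_apply, Matrix.single, Matrix.of_apply,
    smul_eq_mul]
  by_cases hxi : i = x <;> by_cases hxi' : i' = x <;> by_cases hxj : j = x <;>
    by_cases hyi : i = y <;> by_cases hyi' : i' = y <;> by_cases hyj : j = y <;>
    (try subst hxi) <;> (try subst hxi') <;> (try subst hxj) <;>
    (try subst hyi) <;> (try subst hyi') <;> (try subst hyj) <;>
    simp only [*, ne_eq, eq_self_iff_true, if_true, and_true, true_and,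
      and_false, false_and, if_false, not_false_iff, and_self, smul_eq_mul,
      iff_true, iff_false, not_true] <;>
    first
      | rfl
      | (exact absurd rfl h1)
      | (exact absurd rfl h2)
      | (exact absurd rfl h3)
      | ring1

/-- `uOff i i t` is the identity. -/
lemma uOff_self (i : Fin n) (t : F) : uOff i i t = 1 := by
  apply Units.ext
  show XiOff i i t = 1
  unfold XiOff
  rw [show Matrix.single i i (1:F) - Matrix.single i i 1
      - Matrix.single i i 1 + Matrix.single i i 1 = 0 by abel]
  simp [← Matrix.fromBlocks_one]

lemma uD_mem (j : Fin n) (t : F) : uD j t ∈ Subgroup.closure (ELGenAdj F n) :=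
  Subgroup.subset_closure (Or.inl ⟨j, t, rfl⟩)

lemma uOff_adj_mem (i j : Fin n) (hij : (i : ℕ) + 1 = (j : ℕ)) (t : F) :
    uOff i j t ∈ Subgroup.closure (ELGenAdj F n) :=
  Subgroup.subset_closure (Or.inr ⟨i, j, t, hij, rfl⟩)

lemma uOff_mem_aux (x : F) (hx0 : x ≠ 0) (hx1 : x ≠ 1) :
    ∀ d : ℕ, ∀ (i j : Fin n) (t : F), (i : ℕ) + d = (j : ℕ) →
      uOff i j t ∈ Subgroup.closure (ELGenAdj F n) := by
  intro d
  induction d using Nat.strong_induction_on with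
  | _ d IH =>
    intro i j t hd
    match d, hd with
    | 0, hd =>
      have : i = j := Fin.ext (by simpa using hd)
      subst this
      rw [uOff_self]
      exact one_mem _
    | 1, hd => exact uOff_adj_mem i j (by simpa using hd) t
    | (d+2), hd =>
      -- the intermediate index
      have hi' : (i : ℕ) + 1 < n := by
        have hj := j.isLt; omega
      set i' : Fin n := ⟨(i : ℕ) + 1, hi'⟩ with hi'def
      have h1 : i ≠ i' := by
        intro hcon
        have := congrArg Fin.val hcon
        simp [hi'def] at this
      have h2 : i ≠ j := by
        intro hcon; subst hcon; omega
      have h3 : i' ≠ j := by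
        intro hcon
        have := congrArg Fin.val hcon
        simp [hi'def] at this; omega
      set s : F := -x with hsdef
      have hs : s ≠ 0 := neg_ne_zero.mpr hx0
      have hs1 : 1 + s ≠ 0 := by
        rw [hsdef, ← sub_eq_add_neg, sub_ne_zero]
        exact fun hcon => hx1 hcon.symm
      -- the conjugating unit
      set g := uD i 1 * uOff i i' (-(1+s)⁻¹) * uD i (-((1+s)*s⁻¹)) * uD i' 1
        * uOff i i' s * uD i' (-(1+s)⁻¹) with hgdef
      have hgval : (g : Matrix (Fin n ⊕ Fin n) (Fin n ⊕ Fin n) F) = Gmat i i' s := by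
        rw [hgdef]
        push_cast [Units.val_mul]
        exact G_eq i i' h1 s hs hs1
      have hgmem : g ∈ Subgroup.closure (ELGenAdj F n) := by
        rw [hgdef]
        refine mul_mem (mul_mem (mul_mem (mul_mem (mul_mem ?_ ?_) ?_) ?_) ?_) ?_
        · exact uD_mem i 1
        · exact uOff_adj_mem i i' rfl _
        · exact uD_mem i _
        · exact uD_mem i' 1
        · exact uOff_adj_mem i i' rfl _
        · exact uD_mem i' _
      have hmid : uOff i' j t ∈ Subgroup.closure (ELGenAdj F n) := by
        refine IH (d+1) (by omega) i' j t ?_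
        simp [hi'def]; omega
      have hkey : uOff i j t * g = g * uOff i' j t := by
        apply Units.ext
        show XiOff i j t * (g : Matrix (Fin n ⊕ Fin n) (Fin n ⊕ Fin n) F)
          = (g : Matrix (Fin n ⊕ Fin n) (Fin n ⊕ Fin n) F) * XiOff i' j t
        rw [hgval, comm_G i i' j h1 h2 h3]
      have : uOff i j t = g * uOff i' j t * g⁻¹ := by
        rw [← hkey, mul_inv_cancel_right]
      rw [this]
      exact mul_mem (mul_mem hgmem hmid) (inv_mem hgmem)

lemma uOff_mem (x : F) (hx0 : x ≠ 0) (hx1 : x ≠ 1) (i j : Fin n) (t : F) :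
    uOff i j t ∈ Subgroup.closure (ELGenAdj F n) := by
  rcases le_or_gt (i : ℕ) (j : ℕ) with hle | hlt
  · exact uOff_mem_aux x hx0 hx1 ((j : ℕ) - (i : ℕ)) i j t (by omega)
  · have : uOff i j t = uOff j i t := Units.ext (xiOff_symm i j t)
    rw [this]
    exact uOff_mem_aux x hx0 hx1 ((i : ℕ) - (j : ℕ)) j i t (by omega)

end ELAux

open ELAux in
/-- For `F ≠ F₂`, the electrical linear group `EL_n(F)` is generated by the matrices
`Ξ_j(t)` for `1 ≤ j ≤ n` and `Ξ_{j,j+1}(t)` for `1 ≤ j ≤ n−1`. -/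
theorem stmt13 {F : Type*} [Field F] {n : ℕ} (hn : 0 < n)
    (hF : ∃ x : F, x ≠ 0 ∧ x ≠ 1) :
    Subgroup.closure (ELGenAdj F n) = EL F n := by
  obtain ⟨x, hx0, hx1⟩ := hF
  apply le_antisymm
  · apply Subgroup.closure_mono
    rintro A (⟨j, t, hA⟩ | ⟨i, j, t, hij, hA⟩)
    · exact Or.inl ⟨j, t, hA⟩
    · refine Or.inr ⟨i, j, t, ?_, hA⟩
      intro hcon; subst hcon; omega
  · rw [EL]
    apply (Subgroup.closure_le _).mpr
    rintro A (⟨j, t, hA⟩ | ⟨i, j, t, hij, hA⟩)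
    · have : A = uD j t := Units.ext hA
      rw [this]
      exact uD_mem j t
    · have : A = uOff i j t := Units.ext hA
      rw [this]
      exact uOff_mem x hx0 hx1 i j t
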